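/- Let 0 < α₂ < 1/2 and α₁ = 1 − 2α₂, and let ν be the probability measure on ((√2−1)², (√2+1)²) with density √((x − (√2−1)²)((√2+1)² − x))/(2πx) · (α₁ + α₂·x). Define m_k = ∫ x^k dν(x) and the free cumulants κ₂ = m₂ − m₁², κ₃ = m₃ − 3m₁m₂ + 2m₁³, κ₄ = m₄ − 4m₁m₃ − 2m₂² + 10m₁²m₂ − 5m₁⁴. Then the Hankel determinant κ₂κ₄ − κ₃² is strictly negative for every α₂ ∈ (0, 1/2). (Consequently, ν — the law of X^{−1} for X following σ_{α₁,α₂} — is not freely infinitely divisible.) -/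

import Mathlib

open MeasureTheory Set
open scoped NNReal ENNReal

/-- The probability measure on `((√2-1)², (√2+1)²)` with density
`√((x - (√2-1)²)((√2+1)² - x))/(2πx) · (α₁ + α₂·x)`, where `α₁ = 1 - 2α₂`.
It is the law of `X⁻¹` for `X ~ σ_{α₁,α₂}`. -/
noncomputable def nuMeasure (α₂ : ℝ) : Measure ℝ :=
  MeasureTheory.volume.withDensity
    (fun x => ENNReal.ofReal
      ((Set.Ioo ((Real.sqrt 2 - 1) ^ 2) ((Real.sqrt 2 + 1) ^ 2)).indicator
        (fun x =>
          Real.sqrt ((x - (Real.sqrt 2 - 1) ^ 2) * ((Real.sqrt 2 + 1) ^ 2 - x)) /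
              (2 * Real.pi * x) * ((1 - 2 * α₂) + α₂ * x)) x))

local notation "s2" => Real.sqrt 2

lemma sq_s2 : s2 ^ 2 = 2 := Real.sq_sqrt (by norm_num)
lemma s2_gt : (1:ℝ) < s2 := by nlinarith [sq_s2, Real.sqrt_nonneg 2]
lemma A_lt_B : ((s2 - 1)^2 : ℝ) < (s2 + 1)^2 := by nlinarith [s2_gt]
lemma A_pos : (0:ℝ) < (s2 - 1)^2 := by nlinarith [s2_gt]

lemma Qpos {x : ℝ} (hx : x ∈ Set.Ioo ((s2 - 1)^2) ((s2 + 1)^2)) :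
    0 < -x^2 + 6*x - 1 := by
  have h1 := hx.1; have h2 := hx.2
  nlinarith [sq_s2, mul_pos (sub_pos.2 h1) (sub_pos.2 h2)]

lemma polyDeriv (a0 a1 a2 a3 a4 a5 x : ℝ) :
    HasDerivAt (fun x : ℝ => a0 + a1*x + a2*x^2 + a3*x^3 + a4*x^4 + a5*x^5)
      (a1 + 2*a2*x + 3*a3*x^2 + 4*a4*x^3 + 5*a5*x^4) x := by
  have h := (((((hasDerivAt_const x a0).add ((hasDerivAt_id x).const_mul a1)).add
      ((hasDerivAt_pow 2 x).const_mul a2)).add ((hasDerivAt_pow 3 x).const_mul a3)).add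
      ((hasDerivAt_pow 4 x).const_mul a4)).add ((hasDerivAt_pow 5 x).const_mul a5)
  refine h.congr_deriv ?_
  norm_num; ring

lemma master (g P P' : ℝ → ℝ) (c : ℝ)
    (hP : ∀ x, HasDerivAt P (P' x) x)
    (hg : Continuous g)
    (hid : ∀ x : ℝ, P' x * (-x^2+6*x-1) + P x * (3-x) + c = g x * (-x^2+6*x-1)) :
    ∫ x in ((s2 - 1)^2)..((s2 + 1)^2),
      g x * Real.sqrt (-x^2+6*x-1) = c * Real.pi := by
  have hPcont : Continuous P :=
    continuous_iff_continuousAt.2 fun x => (hP x).differentiableAt.continuousAt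
  have hs2pos : (0:ℝ) < s2 := by linarith [s2_gt]
  set F : ℝ → ℝ := fun x =>
    P x * Real.sqrt (-x^2+6*x-1) + c * Real.arcsin ((x - 3)/(2*s2)) with hF
  have hQc : Continuous fun x : ℝ => -x^2+6*x-1 := by continuity
  have hcont : ContinuousOn F (Icc ((s2 - 1)^2) ((s2 + 1)^2)) := by
    apply Continuous.continuousOn
    exact (hPcont.mul (Real.continuous_sqrt.comp hQc)).add
      (continuous_const.mul (Real.continuous_arcsin.comp (by continuity)))
  have hderiv : ∀ x ∈ Ioo ((s2 - 1)^2) ((s2 + 1)^2),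
      HasDerivWithinAt F (g x * Real.sqrt (-x^2+6*x-1)) (Ioi x) x := by
    intro x hx
    have hQ : 0 < -x^2+6*x-1 := Qpos hx
    have hsq : 0 < Real.sqrt (-x^2+6*x-1) := Real.sqrt_pos.2 hQ
    have hsqq : Real.sqrt (-x^2+6*x-1) ^ 2 = -x^2+6*x-1 := Real.sq_sqrt hQ.le
    have h8 : (x-3)^2 < 8 := by nlinarith
    have hQd : HasDerivAt (fun x : ℝ => -x^2+6*x-1) (-2*x+6) x := by
      have h := (((hasDerivAt_pow 2 x).neg).add ((hasDerivAt_id x).const_mul 6)).sub_const 1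
      refine h.congr_deriv ?_
      norm_num
    have hsqrtd : HasDerivAt (fun x : ℝ => Real.sqrt (-x^2+6*x-1))
        (1 / (2 * Real.sqrt (-x^2+6*x-1)) * (-2*x+6)) x :=
      (Real.hasDerivAt_sqrt hQ.ne').comp x hQd
    have hwd : HasDerivAt (fun x : ℝ => (x - 3)/(2*s2)) (1/(2*s2)) x := by
      simpa using ((hasDerivAt_id x).sub_const 3).div_const (2*s2)
    have hwsq : ((x-3)/(2*s2))^2 < 1 := by
      rw [div_pow, div_lt_one (by positivity)]
      nlinarith [sq_s2]
    have hw1 : (x - 3)/(2*s2) ≠ 1 := by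
      intro h; rw [h] at hwsq; norm_num at hwsq
    have hwm1 : (x - 3)/(2*s2) ≠ -1 := by
      intro h; rw [h] at hwsq; norm_num at hwsq
    have harc : HasDerivAt (fun x : ℝ => Real.arcsin ((x - 3)/(2*s2)))
        (1 / Real.sqrt (1 - ((x-3)/(2*s2))^2) * (1/(2*s2))) x :=
      (Real.hasDerivAt_arcsin hwm1 hw1).comp (h := fun x : ℝ => (x - 3)/(2*s2)) x hwd
    have h1w : 1 - ((x-3)/(2*s2))^2 = (-x^2+6*x-1)/8 := by
      rw [div_pow]
      have : (2*s2)^2 = 8 := by nlinarith [sq_s2]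
      rw [this]; ring
    have hsqrt8 : Real.sqrt ((-x^2+6*x-1)/8) = Real.sqrt (-x^2+6*x-1) / (2*s2) := by
      rw [show ((-x^2+6*x-1)/8 : ℝ) = (-x^2+6*x-1) / (2*s2)^2 by
            rw [show (2*s2)^2 = 8 by nlinarith [sq_s2]],
        Real.sqrt_div hQ.le, Real.sqrt_sq (by positivity)]
    have htot : HasDerivAt F
        (P' x * Real.sqrt (-x^2+6*x-1) +
          P x * (1 / (2 * Real.sqrt (-x^2+6*x-1)) * (-2*x+6)) +
          c * (1 / Real.sqrt (1 - ((x-3)/(2*s2))^2) * (1/(2*s2)))) x := by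
      exact ((hP x).mul hsqrtd).add (harc.const_mul c)
    have heq : P' x * Real.sqrt (-x^2+6*x-1) +
          P x * (1 / (2 * Real.sqrt (-x^2+6*x-1)) * (-2*x+6)) +
          c * (1 / Real.sqrt (1 - ((x-3)/(2*s2))^2) * (1/(2*s2)))
        = g x * Real.sqrt (-x^2+6*x-1) := by
      rw [h1w, hsqrt8]
      have hs2ne : s2 ≠ 0 := by positivity
      generalize Real.sqrt (-x^2+6*x-1) = s at hsqq hsq ⊢
      field_simp
      linear_combination 2 * (hid x) + (2*(P' x - g x)) * hsqq
    rw [heq] at htot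
    exact htot.hasDerivWithinAt
  have hint : IntervalIntegrable (fun x => g x * Real.sqrt (-x^2+6*x-1))
      volume ((s2 - 1)^2) ((s2 + 1)^2) :=
    (hg.mul (Real.continuous_sqrt.comp hQc)).intervalIntegrable _ _
  rw [intervalIntegral.integral_eq_sub_of_hasDeriv_right_of_le A_lt_B.le hcont hderiv hint]
  have hQa : -((s2-1)^2)^2 + 6*((s2-1)^2) - 1 = 0 := by nlinarith [sq_s2]
  have hQb : -((s2+1)^2)^2 + 6*((s2+1)^2) - 1 = 0 := by nlinarith [sq_s2]
  have hb3 : ((s2+1)^2 - 3)/(2*s2) = 1 := by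
    rw [div_eq_one_iff_eq (by positivity)]; nlinarith [sq_s2]
  have ha3 : ((s2-1)^2 - 3)/(2*s2) = -1 := by
    rw [div_eq_iff (by positivity : (2*s2 : ℝ) ≠ 0)]; nlinarith [sq_s2]
  simp only [hF]
  rw [hQa, hQb, hb3, ha3, Real.sqrt_zero, Real.arcsin_one, Real.arcsin_neg_one]
  ring

lemma master_poly (n : ℕ) (a0 a1 a2 a3 a4 a5 c : ℝ)
    (hid : ∀ x : ℝ, (a1 + 2*a2*x + 3*a3*x^2 + 4*a4*x^3 + 5*a5*x^4) * (-x^2+6*x-1) +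
        (a0 + a1*x + a2*x^2 + a3*x^3 + a4*x^4 + a5*x^5) * (3-x) + c
        = x^n * (-x^2+6*x-1)) :
    ∫ x in ((s2 - 1)^2)..((s2 + 1)^2), x^n * Real.sqrt (-x^2+6*x-1) = c * Real.pi :=
  master (fun x => x^n) _ _ c (fun x => polyDeriv a0 a1 a2 a3 a4 a5 x)
    (continuous_pow n) hid

lemma intJ0 : ∫ x in ((s2 - 1)^2)..((s2 + 1)^2),
    x^0 * Real.sqrt (-x^2+6*x-1) = 4 * Real.pi :=
  master_poly 0 (-3/2) (1/2) 0 0 0 0 4 (by intro x; ring)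

lemma intJ1 : ∫ x in ((s2 - 1)^2)..((s2 + 1)^2),
    x^1 * Real.sqrt (-x^2+6*x-1) = 12 * Real.pi :=
  master_poly 1 (-25/6) (-1/2) (1/3) 0 0 0 12 (by intro x; ring)

lemma intJ2 : ∫ x in ((s2 - 1)^2)..((s2 + 1)^2),
    x^2 * Real.sqrt (-x^2+6*x-1) = 44 * Real.pi :=
  master_poly 2 (-61/4) (-7/4) (-1/4) (1/4) 0 0 44 (by intro x; ring)

lemma intJ3 : ∫ x in ((s2 - 1)^2)..((s2 + 1)^2),
    x^3 * Real.sqrt (-x^2+6*x-1) = 180 * Real.pi :=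
  master_poly 3 (-3743/60) (-143/20) (-59/60) (-3/20) (1/5) 0 180 (by intro x; ring)

lemma intJ4 : ∫ x in ((s2 - 1)^2)..((s2 + 1)^2),
    x^4 * Real.sqrt (-x^2+6*x-1) = 788 * Real.pi :=
  master_poly 4 (-2731/10) (-313/10) (-43/10) (-19/30) (-1/10) (1/6) 788 (by intro x; ring)

lemma nu_int (α₂ : ℝ) (h0 : 0 ≤ α₂) (h12 : α₂ ≤ 1/2) (n : ℕ) (c c' : ℝ)
    (hn : ∫ x in ((s2 - 1)^2)..((s2 + 1)^2), x^n * Real.sqrt (-x^2+6*x-1) = c * Real.pi)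
    (hn' : ∫ x in ((s2 - 1)^2)..((s2 + 1)^2), x^(n+1) * Real.sqrt (-x^2+6*x-1) = c' * Real.pi) :
    ∫ x : ℝ, x^(n+1) ∂(nuMeasure α₂) = ((1-2*α₂)*c + α₂*c')/2 := by
  set A : ℝ := (s2 - 1)^2 with hA
  set B : ℝ := (s2 + 1)^2 with hB
  set f : ℝ → ℝ := fun x =>
    Real.sqrt ((x - A) * (B - x)) / (2 * Real.pi * x) * ((1 - 2 * α₂) + α₂ * x) with hf
  set dens : ℝ → ℝ := (Set.Ioo A B).indicator f with hdens
  have hf_meas : Measurable f := by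
    apply Measurable.mul
    · exact (Real.continuous_sqrt.measurable.comp (by fun_prop)).div (by fun_prop)
    · fun_prop
  have hdens_meas : Measurable dens := hf_meas.indicator measurableSet_Ioo
  have hdens_nonneg : ∀ x, 0 ≤ dens x := by
    intro x
    apply Set.indicator_nonneg
    intro y hy
    have hy0 : 0 < y := lt_trans A_pos hy.1
    have h1 : 0 ≤ Real.sqrt ((y - A) * (B - y)) / (2 * Real.pi * y) :=
      div_nonneg (Real.sqrt_nonneg _) (by positivity)
    have h2 : 0 ≤ (1 - 2 * α₂) + α₂ * y := by nlinarith
    exact mul_nonneg h1 h2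
  have step1 : ∫ x : ℝ, x^(n+1) ∂(nuMeasure α₂) = ∫ x : ℝ, dens x * x^(n+1) := by
    rw [nuMeasure]
    rw [show (fun x => ENNReal.ofReal
        ((Set.Ioo ((Real.sqrt 2 - 1) ^ 2) ((Real.sqrt 2 + 1) ^ 2)).indicator
        (fun x => Real.sqrt ((x - (Real.sqrt 2 - 1) ^ 2) * ((Real.sqrt 2 + 1) ^ 2 - x)) /
              (2 * Real.pi * x) * ((1 - 2 * α₂) + α₂ * x)) x))
        = fun x => (((fun y => (dens y).toNNReal) x : ℝ≥0) : ℝ≥0∞) from rfl]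
    rw [integral_withDensity_eq_integral_smul (hdens_meas.real_toNNReal) _]
    congr 1; funext x
    rw [NNReal.smul_def, Real.coe_toNNReal _ (hdens_nonneg x), smul_eq_mul]
  have step2 : ∫ x : ℝ, dens x * x^(n+1) = ∫ x in A..B, f x * x^(n+1) := by
    rw [intervalIntegral.integral_of_le A_lt_B.le, integral_Ioc_eq_integral_Ioo,
      ← integral_indicator measurableSet_Ioo]
    congr 1; funext x
    rw [hdens]
    exact (Set.indicator_mul_left _ _ _).symm
  have step3 : ∫ x in A..B, f x * x^(n+1) =
      ∫ x in A..B, ((1-2*α₂)/(2*Real.pi) * (x^n * Real.sqrt (-x^2+6*x-1)) +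
        α₂/(2*Real.pi) * (x^(n+1) * Real.sqrt (-x^2+6*x-1))) := by
    apply intervalIntegral.integral_congr
    intro x hx
    rw [uIcc_of_le A_lt_B.le] at hx
    have hxpos : 0 < x := lt_of_lt_of_le A_pos hx.1
    have hQrw : (x - A) * (B - x) = -x^2+6*x-1 := by
      rw [hA, hB]; linear_combination (2*x - s2^2) * sq_s2
    simp only [hf, hQrw]
    have hpi : Real.pi ≠ 0 := Real.pi_ne_zero
    field_simp
    ring
  have cont1 : Continuous fun x : ℝ =>
      (1-2*α₂)/(2*Real.pi) * (x^n * Real.sqrt (-x^2+6*x-1)) := by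
    apply continuous_const.mul
    exact (continuous_pow n).mul (Real.continuous_sqrt.comp (by fun_prop))
  have cont2 : Continuous fun x : ℝ =>
      α₂/(2*Real.pi) * (x^(n+1) * Real.sqrt (-x^2+6*x-1)) := by
    apply continuous_const.mul
    exact (continuous_pow (n+1)).mul (Real.continuous_sqrt.comp (by fun_prop))
  rw [step1, step2, step3, intervalIntegral.integral_add
      (cont1.intervalIntegrable _ _) (cont2.intervalIntegrable _ _),
    intervalIntegral.integral_const_mul, intervalIntegral.integral_const_mul, hn, hn']
  have hpi : Real.pi ≠ 0 := Real.pi_ne_zero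
  field_simp

/-- For `0 < α₂ < 1/2` and `α₁ = 1 - 2α₂`, the Hankel determinant `κ₂κ₄ - κ₃²` of the
free cumulants of `ν` (computed from the moments via the moment-cumulant formulas)
is strictly negative. -/
theorem nu_hankel_neg (α₂ : ℝ) (h0 : 0 < α₂) (h12 : α₂ < 1 / 2)
    (m₁ m₂ m₃ m₄ κ₂ κ₃ κ₄ : ℝ)
    (hm₁ : m₁ = ∫ x : ℝ, x ∂(nuMeasure α₂))
    (hm₂ : m₂ = ∫ x : ℝ, x ^ 2 ∂(nuMeasure α₂))
    (hm₃ : m₃ = ∫ x : ℝ, x ^ 3 ∂(nuMeasure α₂))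
    (hm₄ : m₄ = ∫ x : ℝ, x ^ 4 ∂(nuMeasure α₂))
    (hκ₂ : κ₂ = m₂ - m₁ ^ 2)
    (hκ₃ : κ₃ = m₃ - 3 * m₁ * m₂ + 2 * m₁ ^ 3)
    (hκ₄ : κ₄ = m₄ - 4 * m₁ * m₃ - 2 * m₂ ^ 2 + 10 * m₁ ^ 2 * m₂ - 5 * m₁ ^ 4) :
    κ₂ * κ₄ - κ₃ ^ 2 < 0 := by
  have e1 : m₁ = 2 + 2*α₂ := by
    have h := nu_int α₂ h0.le h12.le 0 4 12 intJ0 intJ1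
    norm_num at h
    rw [hm₁, h]; ring
  have e2 : m₂ = 6 + 10*α₂ := by
    have h := nu_int α₂ h0.le h12.le 1 12 44 intJ1 intJ2
    norm_num at h
    rw [hm₂, h]; ring
  have e3 : m₃ = 22 + 46*α₂ := by
    have h := nu_int α₂ h0.le h12.le 2 44 180 intJ2 intJ3
    norm_num at h
    rw [hm₃, h]; ring
  have e4 : m₄ = 90 + 214*α₂ := by
    have h := nu_int α₂ h0.le h12.le 3 180 788 intJ3 intJ4
    norm_num at h
    rw [hm₄, h]; ring
  rw [hκ₂, hκ₃, hκ₄, e1, e2, e3, e4]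
  have h2 : 0 < 1 - 2*α₂ := by linarith
  have hq : 0 < (1 + α₂ - 2*α₂^2)^2 - 2*α₂^2 := by
    nlinarith [mul_pos h0 h2, sq_nonneg α₂, sq_nonneg (α₂ - 2*α₂^2)]
  have hfinal : (6 + 10*α₂ - (2 + 2*α₂) ^ 2) *
      (90 + 214*α₂ - 4 * (2 + 2*α₂) * (22 + 46*α₂) - 2 * (6 + 10*α₂) ^ 2 +
        10 * (2 + 2*α₂) ^ 2 * (6 + 10*α₂) - 5 * (2 + 2*α₂) ^ 4) -
      (22 + 46*α₂ - 3 * (2 + 2*α₂) * (6 + 10*α₂) + 2 * (2 + 2*α₂) ^ 3) ^ 2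
      = -(8*α₂*(1-2*α₂)*((1 + α₂ - 2*α₂^2)^2 - 2*α₂^2)) := by ring
  rw [hfinal]
  exact neg_lt_zero.mpr (by positivity)
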